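/- arXiv:2505.01704 — 2 statements merged into one kernel-verified Lean document; each statement's English description precedes it below -/
import Mathlib

section
/- There exists a constant C > 0 such that for all y > 0 and ε > 0, one has 0 ≤ K₀(y) − K₀(√(y² + ε)) ≤ C · log(1 + ε/y²). -/
open MeasureTheory Filter Set Topology

/-- Macdonald function `K₀`, via its integral representation. -/
noncomputable def K0 (x : ℝ) : ℝ := ∫ t in Set.Ioi (0 : ℝ), Real.exp (-x * Real.cosh t)

lemma self_le_cosh {t : ℝ} (ht : 0 ≤ t) : t ≤ Real.cosh t := by
  rcases eq_or_lt_of_le ht with h | h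
  · rw [← h]; positivity
  · exact (Real.self_lt_sinh_iff.2 h).le.trans (le_of_lt (Real.sinh_lt_cosh t))

lemma self_le_sinh {t : ℝ} (ht : 0 ≤ t) : t ≤ Real.sinh t := by
  rcases eq_or_lt_of_le ht with h | h
  · simp [← h]
  · exact (Real.self_lt_sinh_iff.2 h).le

lemma integrable_K0 {x : ℝ} (hx : 0 < x) :
    IntegrableOn (fun t ↦ Real.exp (-x * Real.cosh t)) (Set.Ioi (0:ℝ)) := by
  apply (exp_neg_integrableOn_Ioi 0 hx).mono'
  · exact (Continuous.aestronglyMeasurable (by continuity)).restrict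
  · filter_upwards [ae_restrict_mem measurableSet_Ioi] with t ht
    rw [Real.norm_eq_abs, abs_of_pos (Real.exp_pos _), Real.exp_le_exp]
    have := self_le_cosh (le_of_lt ht)
    nlinarith

lemma integrable_sinh_kernel {x : ℝ} (hx : 0 < x) :
    IntegrableOn (fun t ↦ Real.cosh t * Real.exp (-x * Real.sinh t)) (Set.Ioi (0:ℝ)) := by
  apply ((exp_neg_integrableOn_Ioi 0 (half_pos hx)).const_mul (1 + 2 / x)).mono'
  · exact (Continuous.aestronglyMeasurable (by continuity)).restrict
  · filter_upwards [ae_restrict_mem measurableSet_Ioi] with t ht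
    have ht' : (0:ℝ) ≤ t := le_of_lt ht
    set s := Real.sinh t with hs
    have hs0 : 0 ≤ s := le_trans ht' (self_le_sinh ht')
    have hts : t ≤ s := self_le_sinh ht'
    have hcs : Real.cosh t ≤ 1 + s := by
      have : Real.cosh t - Real.sinh t = Real.exp (-t) := Real.cosh_sub_sinh t
      have h1 : Real.exp (-t) ≤ 1 := Real.exp_le_one_iff.2 (by linarith)
      linarith
    have key : (x/2) * s ≤ Real.exp ((x/2) * s) := by
      have := Real.add_one_le_exp ((x/2) * s)
      linarith
    have hep : (0:ℝ) < Real.exp (-(x/2) * s) := Real.exp_pos _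
    have hse : s * Real.exp (-(x/2) * s) ≤ 2 / x := by
      have h2 : Real.exp ((x/2)*s) * Real.exp (-(x/2)*s) = 1 := by
        rw [← Real.exp_add]; ring_nf; exact Real.exp_zero
      have h3 := mul_le_mul_of_nonneg_right key hep.le
      rw [h2] at h3
      rw [le_div_iff₀ hx]
      nlinarith
    have he1 : Real.exp (-x*s) = Real.exp (-(x/2)*s) * Real.exp (-(x/2)*s) := by
      rw [← Real.exp_add]; ring_nf
    have he2 : Real.exp (-(x/2)*s) ≤ Real.exp (-(x/2)*t) :=
      Real.exp_le_exp.2 (by nlinarith)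
    have he3 : Real.exp (-(x/2)*s) ≤ 1 := Real.exp_le_one_iff.2 (by nlinarith)
    have hep2 : (0:ℝ) < Real.exp (-(x/2) * t) := Real.exp_pos _
    rw [Real.norm_eq_abs, abs_of_nonneg (by positivity)]
    have hch : (0:ℝ) < Real.cosh t := Real.cosh_pos t
    calc Real.cosh t * Real.exp (-x*s)
        ≤ (1 + s) * (Real.exp (-(x/2)*s) * Real.exp (-(x/2)*s)) := by
          rw [← he1]; exact mul_le_mul_of_nonneg_right hcs (Real.exp_pos _).le
      _ = (Real.exp (-(x/2)*s) + s * Real.exp (-(x/2)*s)) * Real.exp (-(x/2)*s) := by ring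
      _ ≤ (1 + 2/x) * Real.exp (-(x/2)*t) := by
          have hx2 : (0:ℝ) ≤ 2/x := by positivity
          have : Real.exp (-(x/2)*s) + s * Real.exp (-(x/2)*s) ≤ 1 + 2/x := by linarith
          exact mul_le_mul this he2 hep.le (by linarith)

lemma integrable_cosh_kernel {x : ℝ} (hx : 0 < x) :
    IntegrableOn (fun t ↦ Real.cosh t * Real.exp (-x * Real.cosh t)) (Set.Ioi (0:ℝ)) := by
  apply (integrable_sinh_kernel hx).mono'
  · exact (Continuous.aestronglyMeasurable (by continuity)).restrict
  · filter_upwards [ae_restrict_mem measurableSet_Ioi] with t ht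
    have ht' : (0:ℝ) ≤ t := le_of_lt ht
    have hch : (0:ℝ) < Real.cosh t := Real.cosh_pos t
    rw [Real.norm_eq_abs, abs_of_nonneg (by positivity)]
    have : Real.exp (-x * Real.cosh t) ≤ Real.exp (-x * Real.sinh t) := by
      rw [Real.exp_le_exp]
      have := le_of_lt (Real.sinh_lt_cosh t)
      nlinarith
    exact mul_le_mul_of_nonneg_left this hch.le

lemma sinh_integral_eq {x : ℝ} (hx : 0 < x) :
    ∫ t in Set.Ioi (0:ℝ), Real.cosh t * Real.exp (-x * Real.sinh t) = 1 / x := by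
  have hderiv : ∀ t ∈ Set.Ioi (0:ℝ),
      HasDerivAt (fun t ↦ -(1/x) * Real.exp (-x * Real.sinh t))
        (Real.cosh t * Real.exp (-x * Real.sinh t)) t := by
    intro t _
    have h1 : HasDerivAt (fun t ↦ -x * Real.sinh t) (-x * Real.cosh t) t :=
      (Real.hasDerivAt_sinh t).const_mul (-x)
    have h2 := (h1.exp).const_mul (-(1/x))
    refine h2.congr_deriv ?_
    field_simp [hx.ne']
  have htend : Tendsto (fun t ↦ -(1/x) * Real.exp (-x * Real.sinh t)) atTop (nhds 0) := by
    have hev : (id : ℝ → ℝ) ≤ᶠ[atTop] Real.sinh := by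
      filter_upwards [eventually_ge_atTop (0:ℝ)] with t ht
      exact self_le_sinh ht
    have hsinh : Tendsto Real.sinh atTop atTop :=
      tendsto_atTop_mono' atTop hev tendsto_id
    have h1 : Tendsto (fun t : ℝ ↦ -x * Real.sinh t) atTop atBot :=
      hsinh.const_mul_atTop_of_neg (by linarith)
    have := (Real.tendsto_exp_atBot.comp h1).const_mul (-(1/x))
    simpa using this
  have := integral_Ioi_of_hasDerivAt_of_tendsto
    (f := fun t ↦ -(1/x) * Real.exp (-x * Real.sinh t))
    ((Continuous.continuousWithinAt (by continuity))) hderiv (integrable_sinh_kernel hx) htend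
  rw [this]; simp [Real.sinh_zero]

lemma K1_le {x : ℝ} (hx : 0 < x) :
    ∫ t in Set.Ioi (0:ℝ), Real.cosh t * Real.exp (-x * Real.cosh t) ≤ 1 / x := by
  rw [← sinh_integral_eq hx]
  refine setIntegral_mono_on (integrable_cosh_kernel hx) (integrable_sinh_kernel hx)
    measurableSet_Ioi fun t ht ↦ ?_
  have hch : (0:ℝ) < Real.cosh t := Real.cosh_pos t
  have := le_of_lt (Real.sinh_lt_cosh t)
  exact mul_le_mul_of_nonneg_left (Real.exp_le_exp.2 (by nlinarith)) hch.le

lemma K0_hasDerivAt {x : ℝ} (hx : 0 < x) :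
    HasDerivAt K0 (∫ t in Set.Ioi (0:ℝ), -(Real.cosh t * Real.exp (-x * Real.cosh t))) x := by
  have main := hasDerivAt_integral_of_dominated_loc_of_deriv_le (x₀ := x)
    (F := fun x t ↦ Real.exp (-x * Real.cosh t))
    (F' := fun x t ↦ -(Real.cosh t * Real.exp (-x * Real.cosh t)))
    (bound := fun t ↦ Real.cosh t * Real.exp (-(x/2) * Real.cosh t))
    (μ := volume.restrict (Set.Ioi (0:ℝ))) (Metric.ball_mem_nhds x (half_pos hx))
    (Eventually.of_forall fun y ↦ (Continuous.aestronglyMeasurable (by continuity)).restrict)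
    (integrable_K0 hx)
    ((Continuous.aestronglyMeasurable (by continuity)).restrict)
    ?_ (integrable_cosh_kernel (half_pos hx)) ?_
  · exact main.2
  · filter_upwards [ae_restrict_mem measurableSet_Ioi] with t ht
    intro z hz
    rw [Metric.mem_ball, Real.dist_eq, abs_lt] at hz
    have hz' : x/2 < z := by linarith [hz.1]
    have hch : (0:ℝ) < Real.cosh t := Real.cosh_pos t
    rw [Real.norm_eq_abs, abs_neg, abs_of_nonneg (by positivity)]
    exact mul_le_mul_of_nonneg_left (Real.exp_le_exp.2 (by nlinarith)) hch.le
  · filter_upwards [ae_restrict_mem measurableSet_Ioi] with t _ z _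
    have h1 : HasDerivAt (fun z : ℝ ↦ -z * Real.cosh t) (-Real.cosh t) z := by
      simpa using ((hasDerivAt_id z).const_mul (-1 : ℝ)).mul_const (Real.cosh t)
    have := h1.exp
    refine this.congr_deriv ?_
    ring

lemma K0_diff_le_log {a b : ℝ} (ha : 0 < a) (hab : a ≤ b) :
    K0 a - K0 b ≤ Real.log b - Real.log a := by
  set g : ℝ → ℝ := fun x ↦ K0 x + Real.log x with hg
  have hmono : MonotoneOn g (Set.Ioi (0:ℝ)) := by
    have hd : ∀ x ∈ Set.Ioi (0:ℝ), HasDerivAt g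
        ((∫ t in Set.Ioi (0:ℝ), -(Real.cosh t * Real.exp (-x * Real.cosh t))) + x⁻¹) x := by
      intro x hx
      exact (K0_hasDerivAt hx).add (Real.hasDerivAt_log (ne_of_gt hx))
    apply monotoneOn_of_deriv_nonneg (convex_Ioi 0)
    · intro x hx; exact ((hd x hx).continuousAt).continuousWithinAt
    · intro x hx
      rw [interior_Ioi] at hx
      exact (hd x hx).differentiableAt.differentiableWithinAt
    · intro x hx
      rw [interior_Ioi] at hx
      rw [(hd x hx).deriv]
      have h1 : ∫ t in Set.Ioi (0:ℝ), -(Real.cosh t * Real.exp (-x * Real.cosh t))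
          = -∫ t in Set.Ioi (0:ℝ), Real.cosh t * Real.exp (-x * Real.cosh t) := by
        rw [integral_neg]
      rw [h1]
      have := K1_le hx
      rw [one_div] at this
      linarith
  have hb : 0 < b := lt_of_lt_of_le ha hab
  have := hmono (Set.mem_Ioi.2 ha) (Set.mem_Ioi.2 hb) hab
  simp only [hg] at this
  linarith

/-- Modulus-of-continuity bound for `K₀` from the proof of Lemma 5.8:
there is `C > 0` with `0 ≤ K₀(y) − K₀(√(y² + ε)) ≤ C log(1 + ε/y²)` for all
`y > 0` and `ε > 0`. -/
theorem K0_modulus_of_continuity :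
    ∃ C : ℝ, 0 < C ∧ ∀ y : ℝ, 0 < y → ∀ ε : ℝ, 0 < ε →
      0 ≤ K0 y - K0 (Real.sqrt (y ^ 2 + ε)) ∧
      K0 y - K0 (Real.sqrt (y ^ 2 + ε)) ≤ C * Real.log (1 + ε / y ^ 2) := by
  refine ⟨1, one_pos, fun y hy ε hε ↦ ?_⟩
  set b := Real.sqrt (y ^ 2 + ε) with hb
  have hyε : (0:ℝ) < y ^ 2 + ε := by positivity
  have hyb : y ≤ b := by
    rw [hb]
    nlinarith [Real.sq_sqrt hyε.le, Real.sqrt_nonneg (y^2+ε), sq_nonneg (Real.sqrt (y^2+ε) - y)]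
  have hbpos : 0 < b := lt_of_lt_of_le hy hyb
  constructor
  · rw [sub_nonneg]
    apply setIntegral_mono_on (integrable_K0 hbpos) (integrable_K0 hy) measurableSet_Ioi
    intro t ht
    have hch : (0:ℝ) < Real.cosh t := Real.cosh_pos t
    exact Real.exp_le_exp.2 (by nlinarith)
  · have h1 := K0_diff_le_log hy hyb
    have h2 : Real.log b - Real.log y = Real.log (1 + ε / y ^ 2) / 2 := by
      rw [hb, Real.log_sqrt hyε.le]
      have : (1 : ℝ) + ε / y ^ 2 = (y ^ 2 + ε) / y ^ 2 := by field_simp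
      rw [this, Real.log_div (by positivity) (by positivity), Real.log_pow]
      push_cast
      ring
    have hlog : 0 ≤ Real.log (1 + ε / y ^ 2) :=
      Real.log_nonneg (by nlinarith [div_pos hε (by positivity : (0:ℝ) < y^2)])
    rw [h2] at h1
    linarith
end

section
/- For every β > 0 and every p > 0 there exists a constant C > 0 (depending only on β and p) such that for all z ∈ ℝ² and all s > 0, ∫_{ℝ²} K₀(√(2β) ‖x‖)^{−p} · (2πs)^{−1} e^{−‖x − z‖²/(2s)} dx ≤ C · e^{C(‖z‖ + s)}. -/
open MeasureTheory Filter Set Topology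

lemma K0_nonneg (x : ℝ) : 0 ≤ K0 x :=
  setIntegral_nonneg measurableSet_Ioi fun t _ => (Real.exp_pos _).le

lemma K0_integrableOn {x : ℝ} (hx : 0 < x) :
    IntegrableOn (fun t => Real.exp (-x * Real.cosh t)) (Set.Ioi (0:ℝ)) := by
  apply (exp_neg_integrableOn_Ioi 0 hx).mono'
  · exact (Real.continuous_exp.comp ((continuous_const.mul Real.continuous_cosh))).aestronglyMeasurable
  · filter_upwards [ae_restrict_mem measurableSet_Ioi] with t ht
    rw [Real.norm_eq_abs, Real.abs_exp]
    apply Real.exp_le_exp.mpr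
    have h1 : t ≤ Real.cosh t := le_of_lt (lt_of_le_of_lt (Real.self_le_sinh_iff.mpr (le_of_lt ht)) (Real.sinh_lt_cosh t))
    nlinarith [le_of_lt (show (0:ℝ) < t from ht)]

lemma K0_lower {x : ℝ} (hx : 0 < x) : Real.exp (-(2*x)) ≤ K0 x := by
  have hcosh1 : Real.cosh 1 ≤ 2 := by
    rw [Real.cosh_eq]
    have h1 := Real.exp_one_lt_d9
    have h2 : Real.exp (-1) < 1 := by
      rw [Real.exp_lt_one_iff]; norm_num
    have : |(-1:ℝ)| = 1 := by norm_num
    nlinarith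
  have step1 : Real.exp (-(2*x)) ≤ ∫ t in Set.Ioc (0:ℝ) 1, Real.exp (-x * Real.cosh t) := by
    have : ∫ t in Set.Ioc (0:ℝ) 1, Real.exp (-(2*x)) ≤ ∫ t in Set.Ioc (0:ℝ) 1, Real.exp (-x * Real.cosh t) := by
      apply setIntegral_mono_on
      · exact (integrableOn_const_iff).mpr (Or.inr (by simp))
      · exact (K0_integrableOn hx).mono_set Set.Ioc_subset_Ioi_self
      · exact measurableSet_Ioc
      · intro t ht
        apply Real.exp_le_exp.mpr
        have : Real.cosh t ≤ 2 := by
          refine le_trans ?_ hcosh1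
          rw [Real.cosh_le_cosh]
          rw [abs_of_pos ht.1, abs_one]; exact ht.2
        nlinarith
    simpa using this.trans_eq' (by simp [Real.volume_Ioc])
  refine step1.trans ?_
  apply setIntegral_mono_set (K0_integrableOn hx)
  · filter_upwards [ae_restrict_mem measurableSet_Ioi] with t _ using (Real.exp_pos _).le
  · exact Filter.Eventually.of_forall Set.Ioc_subset_Ioi_self

lemma K0_zero : K0 0 = 0 := by
  unfold K0
  simp [measureReal_def, Real.volume_Ioi]

lemma gauss_integrable {b : ℝ} (hb : 0 < b) :
    Integrable (fun x : EuclideanSpace ℝ (Fin 2) => Real.exp (-b * ‖x‖^2)) := by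
  have h := (GaussianFourier.integrable_cexp_neg_mul_sq_norm_add (V := EuclideanSpace ℝ (Fin 2))
    (b := (b:ℂ)) (by simpa using hb) 0 0).re
  refine h.congr (Filter.Eventually.of_forall fun v => ?_)
  simp only [RCLike.re_to_complex]
  rw [show (-(b:ℂ) * (‖v‖:ℂ)^2
      + 0 * ((inner ℝ (0 : EuclideanSpace ℝ (Fin 2)) v : ℝ) : ℂ)) = ((-b * ‖v‖^2 : ℝ) : ℂ) by
    push_cast; ring]
  exact Complex.exp_ofReal_re _

lemma gauss_integral {b : ℝ} (hb : 0 < b) :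
    ∫ x : EuclideanSpace ℝ (Fin 2), Real.exp (-b * ‖x‖^2) = Real.pi / b := by
  rw [GaussianFourier.integral_rexp_neg_mul_sq_norm hb]
  simp [finrank_euclideanSpace_fin]

/-- The negative-moment bound (3.25) from the proof of Lemma 3.11: for `β, p > 0`
there is `C > 0` (depending only on `β` and `p`) such that for all `z ∈ ℝ²` and
`s > 0`, `∫ K₀(√(2β)‖x‖)^{-p} (2πs)⁻¹ e^{-‖x−z‖²/(2s)} dx ≤ C e^{C(‖z‖+s)}`. -/
theorem K0_negative_moment_bound (β p : ℝ) (hβ : 0 < β) (hp : 0 < p) :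
    ∃ C : ℝ, 0 < C ∧ ∀ (z : EuclideanSpace ℝ (Fin 2)) (s : ℝ), 0 < s →
      (∫ x : EuclideanSpace ℝ (Fin 2),
          K0 (Real.sqrt (2 * β) * ‖x‖) ^ (-p)
            * ((2 * Real.pi * s)⁻¹ * Real.exp (-‖x - z‖ ^ 2 / (2 * s))))
        ≤ C * Real.exp (C * (‖z‖ + s)) := by
  have h2β : (0:ℝ) < 2 * β := by linarith
  set c := Real.sqrt (2 * β) with hcdef
  have hc : 0 < c := Real.sqrt_pos.mpr h2β
  set a := 2 * c * p with hadef
  have ha : 0 < a := by positivity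
  refine ⟨2 + a + a^2, by positivity, fun z s hs => ?_⟩
  set C := 2 + a + a^2 with hCdef
  have hb : (0:ℝ) < (4*s)⁻¹ := by positivity
  have hπ := Real.pi_pos
  have hπs : (0:ℝ) < 2 * Real.pi * s := by positivity
  set M := Real.exp (a * ‖z‖ + a^2 * s) with hMdef
  have key : ∀ x : EuclideanSpace ℝ (Fin 2),
      K0 (c * ‖x‖) ^ (-p) * ((2 * Real.pi * s)⁻¹ * Real.exp (-‖x - z‖ ^ 2 / (2 * s)))
        ≤ M * ((2 * Real.pi * s)⁻¹ * Real.exp (-(4*s)⁻¹ * ‖x - z‖ ^ 2)) := by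
    intro x
    have hK : K0 (c * ‖x‖) ^ (-p) ≤ Real.exp (a * ‖x‖) := by
      rcases eq_or_lt_of_le (norm_nonneg x) with h0 | h0
      · rw [← h0, mul_zero, K0_zero, Real.zero_rpow (by linarith)]
        positivity
      · have hlow := K0_lower (mul_pos hc h0)
        have h1 : K0 (c * ‖x‖) ^ (-p) ≤ (Real.exp (-(2 * (c * ‖x‖)))) ^ (-p) :=
          Real.rpow_le_rpow_of_nonpos (Real.exp_pos _) hlow (by linarith)
        refine h1.trans_eq ?_
        rw [← Real.exp_mul]
        congr 1
        rw [hadef]; ring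
    have hG : Real.exp (a * ‖x‖) * Real.exp (-‖x - z‖ ^ 2 / (2 * s))
        ≤ M * Real.exp (-(4*s)⁻¹ * ‖x - z‖ ^ 2) := by
      rw [hMdef, ← Real.exp_add, ← Real.exp_add]
      apply Real.exp_le_exp.mpr
      have hy0 : (0:ℝ) ≤ ‖x - z‖ := norm_nonneg _
      have hxz : ‖x‖ ≤ ‖x - z‖ + ‖z‖ := by
        have := norm_sub_norm_le x z; linarith
      have hsplit : -‖x - z‖ ^ 2 / (2 * s)
          = -((4*s)⁻¹ * ‖x - z‖ ^ 2) - (4*s)⁻¹ * ‖x - z‖ ^ 2 := by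
        field_simp; ring
      have key2 : a * ‖x - z‖ - a^2 * s ≤ (4*s)⁻¹ * ‖x - z‖ ^ 2 := by
        rw [inv_mul_eq_div, le_div_iff₀ (by positivity)]
        nlinarith [sq_nonneg (‖x - z‖ - 2 * a * s)]
      have hmul : a * ‖x‖ ≤ a * ‖x - z‖ + a * ‖z‖ := by nlinarith
      rw [hsplit]
      linarith
    calc K0 (c * ‖x‖) ^ (-p) * ((2 * Real.pi * s)⁻¹ * Real.exp (-‖x - z‖ ^ 2 / (2 * s)))
        ≤ Real.exp (a * ‖x‖) * ((2 * Real.pi * s)⁻¹ * Real.exp (-‖x - z‖ ^ 2 / (2 * s))) := by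
          apply mul_le_mul_of_nonneg_right hK
          positivity
      _ ≤ M * ((2 * Real.pi * s)⁻¹ * Real.exp (-(4*s)⁻¹ * ‖x - z‖ ^ 2)) := by
          have h := mul_le_mul_of_nonneg_right hG (le_of_lt (inv_pos.mpr hπs))
          calc Real.exp (a * ‖x‖) * ((2 * Real.pi * s)⁻¹ * Real.exp (-‖x - z‖ ^ 2 / (2 * s)))
              = Real.exp (a * ‖x‖) * Real.exp (-‖x - z‖ ^ 2 / (2 * s)) * (2 * Real.pi * s)⁻¹ := by ring
            _ ≤ M * Real.exp (-(4*s)⁻¹ * ‖x - z‖ ^ 2) * (2 * Real.pi * s)⁻¹ := h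
            _ = M * ((2 * Real.pi * s)⁻¹ * Real.exp (-(4*s)⁻¹ * ‖x - z‖ ^ 2)) := by ring
  have hint : Integrable (fun x : EuclideanSpace ℝ (Fin 2) =>
      M * ((2 * Real.pi * s)⁻¹ * Real.exp (-(4*s)⁻¹ * ‖x - z‖ ^ 2))) := by
    apply Integrable.const_mul
    apply Integrable.const_mul
    have h := gauss_integrable hb
    have hmp : MeasurePreserving (fun x : EuclideanSpace ℝ (Fin 2) => x - z) volume volume :=
      measurePreserving_sub_right volume z
    exact (hmp.integrable_comp_emb (MeasurableEquiv.subRight z).measurableEmbedding).mpr h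
  have hmono : (∫ x : EuclideanSpace ℝ (Fin 2),
      K0 (c * ‖x‖) ^ (-p) * ((2 * Real.pi * s)⁻¹ * Real.exp (-‖x - z‖ ^ 2 / (2 * s))))
      ≤ ∫ x : EuclideanSpace ℝ (Fin 2),
        M * ((2 * Real.pi * s)⁻¹ * Real.exp (-(4*s)⁻¹ * ‖x - z‖ ^ 2)) := by
    apply integral_mono_of_nonneg
    · refine Filter.Eventually.of_forall fun x => ?_
      have := K0_nonneg (c * ‖x‖)
      have h1 : (0:ℝ) ≤ K0 (c * ‖x‖) ^ (-p) := Real.rpow_nonneg this _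
      positivity
    · exact hint
    · exact Filter.Eventually.of_forall key
  have hval : (∫ x : EuclideanSpace ℝ (Fin 2),
      M * ((2 * Real.pi * s)⁻¹ * Real.exp (-(4*s)⁻¹ * ‖x - z‖ ^ 2))) = 2 * M := by
    rw [integral_const_mul, integral_const_mul]
    rw [integral_sub_right_eq_self (fun y : EuclideanSpace ℝ (Fin 2) =>
      Real.exp (-(4*s)⁻¹ * ‖y‖ ^ 2)) z]
    rw [gauss_integral hb]
    field_simp
    ring
  have hfin : 2 * M ≤ C * Real.exp (C * (‖z‖ + s)) := by
    have hzn : (0:ℝ) ≤ ‖z‖ := norm_nonneg z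
    have hexp : a * ‖z‖ + a^2 * s ≤ C * (‖z‖ + s) := by
      rw [hCdef]; nlinarith
    have h2C : (2:ℝ) ≤ C := by rw [hCdef]; nlinarith
    calc 2 * M ≤ C * M := mul_le_mul_of_nonneg_right h2C (Real.exp_pos _).le
      _ ≤ C * Real.exp (C * (‖z‖ + s)) := by
          apply mul_le_mul_of_nonneg_left _ (by linarith)
          exact Real.exp_le_exp.mpr hexp
  calc _ ≤ _ := hmono
    _ = 2 * M := hval
    _ ≤ _ := hfin
end
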